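/- Let W be a set of nonzero arithmetic functions whose orders v(f) (f ∈ W) are multiplicatively independent natural numbers. Then W is algebraically independent over ℂ in the Dirichlet convolution ring. -/

import Mathlib

open ArithmeticFunction
open scoped Classical

/-- The embedding of `ℂ` into the Dirichlet ring of arithmetic functions,
sending `c` to the function with value `c` at `1` and `0` elsewhere. -/
noncomputable def CC : ℂ →+* ArithmeticFunction ℂ where
  toFun c := ⟨fun n => if n = 1 then c else 0, by simp⟩
  map_zero' := by ext n; simp
  map_one' := by ext n; simp [ArithmeticFunction.one_apply]
  map_add' a b := by ext n; show (if n = 1 then a + b else 0) = (if n = 1 then a else 0) + (if n = 1 then b else 0); by_cases h : n = 1 <;> simp [h]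
  map_mul' a b := by
    ext n
    erw [ArithmeticFunction.mul_apply]
    by_cases h : n = 1
    · subst h
      rw [show Nat.divisorsAntidiagonal 1 = {(1,1)} from rfl]
      simp
    · rw [Finset.sum_eq_zero]
      · simp [h]
      · rintro ⟨d, e⟩ hde
        rw [Nat.mem_divisorsAntidiagonal] at hde
        rcases Decidable.eq_or_ne d 1 with hd | hd
        · have : e ≠ 1 := by rintro rfl; exact h (by simp [← hde.1, hd])
          simp [this]
        · simp [hd]

/-- The order `v f` of an arithmetic function: the least element of the support
(`sInf` of the empty set is `0` for `f = 0`; that case is always excluded by hypotheses). -/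
noncomputable def ordN (f : ArithmeticFunction ℂ) : ℕ := sInf {n : ℕ | f n ≠ 0}

/-- The order as an extended natural number, `⊤` for `f = 0`. -/
noncomputable def ordE (f : ArithmeticFunction ℂ) : ℕ∞ :=
  sInf ((fun n : ℕ => (n : ℕ∞)) '' {n : ℕ | f n ≠ 0})

/-- The norm `‖f‖ = 1/v(f)`, with `1/∞ = 0`. -/
noncomputable def nrm (f : ArithmeticFunction ℂ) : ℝ :=
  if f = 0 then 0 else 1 / (ordN f : ℝ)

/-- Extension of an arithmetic function to `ℝ`, vanishing off `ℕ`. -/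
noncomputable def extR (f : ArithmeticFunction ℂ) (x : ℝ) : ℂ :=
  if h : ∃ n : ℕ, (n : ℝ) = x then f h.choose else 0

/-- The exponential map `Exp f = exp(f 1) * ∑ (f - f 1)^k / k!` of the Dirichlet ring.
Since `(f - f 1)^k` has order `≥ 2^k`, the value of the infinite series at `n` equals the
value of the partial sum up to `k = n`. -/
noncomputable def ExpA (f : ArithmeticFunction ℂ) : ArithmeticFunction ℂ :=
  ⟨fun n => Complex.exp (f 1) *
      ((∑ k ∈ Finset.range (n + 1),
        CC ((Nat.factorial k : ℂ)⁻¹) * (f - CC (f 1)) ^ k) n), by simp⟩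

/-- The `p`-basic derivation `(∂_p f) n = v_p (n p) • f (n p)`. -/
noncomputable def DP (p : ℕ) (f : ArithmeticFunction ℂ) : ArithmeticFunction ℂ :=
  ⟨fun n => (padicValNat p (n * p) : ℂ) * f (n * p), by simp⟩

/-- The log-derivation `(∂_L f) n = log n * f n`. -/
noncomputable def DL (f : ArithmeticFunction ℂ) : ArithmeticFunction ℂ :=
  ⟨fun n => (Real.log n : ℂ) * f n, by simp⟩

/-- The pointwise multiplication operator `𝔪_g`. -/
noncomputable def MG (g f : ArithmeticFunction ℂ) : ArithmeticFunction ℂ :=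
  ⟨fun n => g n * f n, by simp⟩

/-- Integer powers `𝔪_g^i` of the pointwise multiplication operator:
`(𝔪_g^i f) n = (g n)^i * f n`. -/
noncomputable def MGi (g : ArithmeticFunction ℂ) (i : ℤ) (f : ArithmeticFunction ℂ) :
    ArithmeticFunction ℂ := ⟨fun n => g n ^ i * f n, by simp⟩

/-- `D` is a (ℂ-linear) derivation of the ring of arithmetic functions
under Dirichlet convolution. -/
def IsDerivationA (D : ArithmeticFunction ℂ → ArithmeticFunction ℂ) : Prop :=
  (∀ f g, D (f + g) = D f + D g) ∧
  (∀ (c : ℂ) (f), D (CC c * f) = CC c * D f) ∧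
  (∀ f g, D (f * g) = D f * g + f * D g)

/-- Convergence of a sequence of arithmetic functions in the norm topology. -/
def TendstoA (s : ℕ → ArithmeticFunction ℂ) (l : ArithmeticFunction ℂ) : Prop :=
  Filter.Tendsto (fun m => nrm (s m - l)) Filter.atTop (nhds 0)

/-- (Sequential) continuity of a map in the norm topology, which for this
ultrametric is equivalent to continuity. -/
def ContinuousA (D : ArithmeticFunction ℂ → ArithmeticFunction ℂ) : Prop :=
  ∀ (s : ℕ → ArithmeticFunction ℂ) (l), TendstoA s l → TendstoA (fun m => D (s m)) (D l)

/-- The indicator function `e_m` of the singleton `{m}`. -/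
noncomputable def En (m : ℕ) : ArithmeticFunction ℂ :=
  ⟨fun n => if 0 < n ∧ n = m then 1 else 0, by simp⟩

/-- The constant one arithmetic function `𝟙`. -/
noncomputable def OneA : ArithmeticFunction ℂ := ⟨fun n => if n = 0 then 0 else 1, by simp⟩

/-- The ℂ-algebra structure of the ring of arithmetic functions, via `CC`. -/
noncomputable instance : Algebra ℂ (ArithmeticFunction ℂ) := CC.toAlgebra

lemma exists_ne_zero' {f : ArithmeticFunction ℂ} (hf : f ≠ 0) : ∃ n, f n ≠ 0 := by
  by_contra h
  push_neg at h
  exact hf (ArithmeticFunction.ext fun n => by simp [h n])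

lemma ordN_mem {f : ArithmeticFunction ℂ} (hf : f ≠ 0) : f (ordN f) ≠ 0 :=
  Nat.sInf_mem (exists_ne_zero' hf)

lemma lt_ordN_zero {f : ArithmeticFunction ℂ} {n : ℕ} (h : n < ordN f) : f n = 0 := by
  by_contra hn
  exact absurd (Nat.sInf_le hn) (not_le.mpr h)

lemma ordN_pos {f : ArithmeticFunction ℂ} (hf : f ≠ 0) : 1 ≤ ordN f := by
  rcases Nat.eq_zero_or_pos (ordN f) with h | h
  · exact absurd (ordN_mem hf) (by rw [h]; simp)
  · exact h

def HasOrd (F : ArithmeticFunction ℂ) (N : ℕ) (c : ℂ) : Prop :=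
  1 ≤ N ∧ (∀ n < N, F n = 0) ∧ F N = c

lemma HasOrd.mul {F G : ArithmeticFunction ℂ} {N M : ℕ} {c d : ℂ}
    (hF : HasOrd F N c) (hG : HasOrd G M d) : HasOrd (F * G) (N * M) (c * d) := by
  obtain ⟨hN, hFv, hFc⟩ := hF
  obtain ⟨hM, hGv, hGc⟩ := hG
  refine ⟨Nat.one_le_iff_ne_zero.mpr (by positivity), ?_, ?_⟩
  · intro n hn
    rw [ArithmeticFunction.mul_apply]
    apply Finset.sum_eq_zero
    rintro ⟨a, b⟩ hab
    rw [Nat.mem_divisorsAntidiagonal] at hab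
    have h1 : a * b = n := hab.1
    by_cases ha : a < N
    · simp [hFv a ha]
    · have hb : b < M := by
        push_neg at ha
        by_contra hb
        push_neg at hb
        have := Nat.mul_le_mul ha hb
        omega
      simp [hGv b hb]
  · have hmem : (N, M) ∈ Nat.divisorsAntidiagonal (N * M) :=
      Nat.mem_divisorsAntidiagonal.mpr ⟨rfl, Nat.mul_ne_zero (by omega) (by omega)⟩
    rw [ArithmeticFunction.mul_apply, Finset.sum_eq_single_of_mem (N, M) hmem]
    · simp [hFc, hGc]
    · rintro ⟨a, b⟩ hab hne
      rw [Nat.mem_divisorsAntidiagonal] at hab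
      have h1 : a * b = N * M := hab.1
      rcases lt_trichotomy a N with ha | ha | ha
      · simp [hFv a ha]
      · exfalso
        subst ha
        have : b = M := Nat.eq_of_mul_eq_mul_left (by omega) h1
        exact hne (by simp [this])
      · have hb : b < M := by
          by_contra hb
          push_neg at hb
          have h2 : N * M < a * M := Nat.mul_lt_mul_of_lt_of_le ha (le_refl M) (by omega)
          have h3 : a * M ≤ a * b := Nat.mul_le_mul_left a hb
          omega
        simp [hGv b hb]

lemma HasOrd.one : HasOrd 1 1 1 :=
  ⟨le_refl 1, fun n hn => by interval_cases n; simp, by simp⟩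

lemma HasOrd.pow {F : ArithmeticFunction ℂ} {N : ℕ} {c : ℂ} (h : HasOrd F N c) (k : ℕ) :
    HasOrd (F ^ k) (N ^ k) (c ^ k) := by
  induction k with
  | zero => simpa using HasOrd.one
  | succ k ih => rw [pow_succ, pow_succ, pow_succ]; exact ih.mul h

lemma HasOrd.prod {ι : Type*} (s : Finset ι) (F : ι → ArithmeticFunction ℂ) (N : ι → ℕ)
    (c : ι → ℂ) (h : ∀ i ∈ s, HasOrd (F i) (N i) (c i)) :
    HasOrd (∏ i ∈ s, F i) (∏ i ∈ s, N i) (∏ i ∈ s, c i) := by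
  induction s using Finset.cons_induction with
  | empty => simpa using HasOrd.one
  | cons a s hx ih =>
    rw [Finset.prod_cons, Finset.prod_cons, Finset.prod_cons]
    exact (h a (Finset.mem_cons_self a s)).mul
      (ih fun i hi => h i (Finset.mem_cons_of_mem hi))

lemma hasOrd_self {f : ArithmeticFunction ℂ} (hf : f ≠ 0) : HasOrd f (ordN f) (f (ordN f)) :=
  ⟨ordN_pos hf, fun _ h => lt_ordN_zero h, rfl⟩

variable {W : Set (ArithmeticFunction ℂ)}

noncomputable def ordM (m : ↥W →₀ ℕ) : ℕ :=
  ∏ x ∈ m.support, (ordN (x : ArithmeticFunction ℂ)) ^ (m x)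

lemma ordM_cast (m : ↥W →₀ ℕ) (s : Finset ↥W) (hs : m.support ⊆ s) :
    (ordM m : ℚ) = ∏ x ∈ s, (ordN (x : ArithmeticFunction ℂ) : ℚ) ^ (m x : ℤ) := by
  rw [ordM, ← Finset.prod_subset hs
    (fun x _ hx => by simp [Finsupp.notMem_support_iff.mp hx]), Nat.cast_prod]
  exact Finset.prod_congr rfl fun x _ => by push_cast; rw [zpow_natCast]

lemma ordM_pos (h0 : ∀ f ∈ W, f ≠ 0) (m : ↥W →₀ ℕ) : 1 ≤ ordM m :=
  Finset.one_le_prod' fun x _ => Nat.one_le_pow _ _ (ordN_pos (h0 x.1 x.2))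

lemma ordM_inj (h0 : ∀ f ∈ W, f ≠ 0)
    (hmi : ∀ (k : ℕ) (f : Fin k → ArithmeticFunction ℂ), (∀ i, f i ∈ W) →
      Function.Injective f →
      ∀ a : Fin k → ℤ, (∏ i, (ordN (f i) : ℚ) ^ (a i)) = 1 → ∀ i, a i = 0)
    {m m' : ↥W →₀ ℕ} (h : ordM m = ordM m') : m = m' := by
  classical
  set s : Finset ↥W := m.support ∪ m'.support with hs
  have hv : ∀ x : ↥W, (ordN (x : ArithmeticFunction ℂ) : ℚ) ≠ 0 := fun x => by
    have := ordN_pos (h0 x.1 x.2)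
    positivity
  have h1 : (∏ x ∈ s, (ordN (x : ArithmeticFunction ℂ) : ℚ) ^ ((m x : ℤ) - (m' x : ℤ))) = 1 := by
    have e1 := ordM_cast m s Finset.subset_union_left
    have e2 := ordM_cast m' s Finset.subset_union_right
    calc (∏ x ∈ s, (ordN (x : ArithmeticFunction ℂ) : ℚ) ^ ((m x : ℤ) - (m' x : ℤ)))
        = (∏ x ∈ s, (ordN (x : ArithmeticFunction ℂ) : ℚ) ^ (m x : ℤ)) *
          (∏ x ∈ s, (ordN (x : ArithmeticFunction ℂ) : ℚ) ^ (m' x : ℤ))⁻¹ := by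
          rw [← Finset.prod_inv_distrib, ← Finset.prod_mul_distrib]
          exact Finset.prod_congr rfl fun x _ => by
            rw [zpow_sub₀ (hv x), div_eq_mul_inv]
      _ = 1 := by
          rw [← e1, ← e2, h,
            mul_inv_cancel₀ (Nat.cast_ne_zero.mpr (by have := ordM_pos h0 m'; omega))]
  -- now apply hmi with an enumeration of s
  have key : ∀ x ∈ s, m x = m' x := by
    set e := s.equivFin with he
    set f : Fin s.card → ArithmeticFunction ℂ := fun i => ((e.symm i : ↥W) : ArithmeticFunction ℂ)
      with hf
    set a : Fin s.card → ℤ := fun i => (m (e.symm i) : ℤ) - (m' (e.symm i) : ℤ) with ha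
    have hinj : Function.Injective f :=
      Subtype.coe_injective.comp (Subtype.coe_injective.comp e.symm.injective)
    have hmem : ∀ i, f i ∈ W := fun i => (e.symm i : ↥W).2
    have hprod : (∏ i, (ordN (f i) : ℚ) ^ (a i)) = 1 := by
      have step : (∏ i, (ordN (f i) : ℚ) ^ (a i)) =
          ∏ x : ↥s, (ordN ((x : ↥W) : ArithmeticFunction ℂ) : ℚ) ^ ((m x : ℤ) - (m' x : ℤ)) :=
        Equiv.prod_comp e.symm
          (fun x : ↥s => (ordN ((x : ↥W) : ArithmeticFunction ℂ) : ℚ) ^ ((m x : ℤ) - (m' x : ℤ)))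
      rw [step]
      exact (Finset.prod_coe_sort s fun x =>
        (ordN ((x : ↥W) : ArithmeticFunction ℂ) : ℚ) ^ ((m x : ℤ) - (m' x : ℤ))).trans h1
    have := hmi s.card f hmem hinj a hprod
    intro x hx
    have := this (e ⟨x, hx⟩)
    rw [ha] at this
    simp only [Equiv.symm_apply_apply] at this
    omega
  ext x
  by_cases hx : x ∈ s
  · exact key x hx
  · rw [hs, Finset.mem_union] at hx
    push_neg at hx
    rw [Finsupp.notMem_support_iff.mp hx.1, Finsupp.notMem_support_iff.mp hx.2]


lemma HasOrd.cc (c : ℂ) : HasOrd (CC c) 1 c := by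
  refine ⟨le_refl 1, fun n hn => ?_, ?_⟩
  · interval_cases n
    show (if (0 : ℕ) = 1 then c else 0) = 0
    simp
  · show (if (1 : ℕ) = 1 then c else 0) = c
    simp

lemma sum_apply' {ι : Type*} (s : Finset ι) (f : ι → ArithmeticFunction ℂ) (n : ℕ) :
    (∑ i ∈ s, f i) n = ∑ i ∈ s, f i n := by
  induction s using Finset.cons_induction with
  | empty => simp
  | cons a s hx ih => rw [Finset.sum_cons, Finset.sum_cons, ArithmeticFunction.add_apply, ih]

/-- If `W` is a set of nonzero arithmetic functions whose orders are multiplicatively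
independent, then `W` is algebraically independent over `ℂ` in the Dirichlet ring. -/
theorem stmt14 (W : Set (ArithmeticFunction ℂ)) (h0 : ∀ f ∈ W, f ≠ 0)
    (hmi : ∀ (k : ℕ) (f : Fin k → ArithmeticFunction ℂ), (∀ i, f i ∈ W) →
      Function.Injective f →
      ∀ a : Fin k → ℤ, (∏ i, (ordN (f i) : ℚ) ^ (a i)) = 1 → ∀ i, a i = 0) :
    AlgebraicIndependent ℂ ((↑) : W → ArithmeticFunction ℂ) := by
    classical
  rw [algebraicIndependent_iff]
  intro p hp
  by_contra hp0
  obtain ⟨m0, hm0, hmin⟩ :=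
    p.support.exists_min_image ordM (MvPolynomial.support_nonempty.mpr hp0)
  have heval : MvPolynomial.aeval ((↑) : ↥W → ArithmeticFunction ℂ) p =
      ∑ m ∈ p.support, CC (p.coeff m) *
        ∏ x ∈ m.support, ((x : ArithmeticFunction ℂ)) ^ m x := by
    rw [MvPolynomial.aeval_def, MvPolynomial.eval₂_eq]
    rfl
  have hterm : ∀ m : ↥W →₀ ℕ, HasOrd (CC (p.coeff m) *
      ∏ x ∈ m.support, ((x : ArithmeticFunction ℂ)) ^ m x) (ordM m)
      (p.coeff m * ∏ x ∈ m.support, ((x : ArithmeticFunction ℂ) (ordN x)) ^ m x) := by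
    intro m
    have := (HasOrd.cc (p.coeff m)).mul (HasOrd.prod m.support
      (fun x => ((x : ArithmeticFunction ℂ)) ^ m x)
      (fun x => ordN (x : ArithmeticFunction ℂ) ^ m x)
      (fun x => ((x : ArithmeticFunction ℂ) (ordN x)) ^ m x)
      (fun x _ => (hasOrd_self (h0 x.1 x.2)).pow (m x)))
    rwa [one_mul] at this
  have hzero : (MvPolynomial.aeval ((↑) : ↥W → ArithmeticFunction ℂ) p) (ordM m0) ≠ 0 := by
    rw [heval, sum_apply', Finset.sum_eq_single_of_mem m0 hm0]
    · rw [(hterm m0).2.2]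
      refine mul_ne_zero (MvPolynomial.mem_support_iff.mp hm0) ?_
      rw [Finset.prod_ne_zero_iff]
      exact fun x _ => pow_ne_zero _ (ordN_mem (h0 x.1 x.2))
    · intro m hm hne
      have hlt : ordM m0 < ordM m :=
        lt_of_le_of_ne (hmin m hm) fun hcon => hne (ordM_inj h0 hmi hcon.symm)
      exact (hterm m).2.1 _ hlt
  rw [hp] at hzero
  exact hzero rfl
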